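/- For all real numbers A, B, C, D, the supremum over real θ and φ of the expression cos²θ · A + sin²θ · B + sin(2θ)·(cos φ · C + sin φ · D) equals (A + B)/2 + √((A − B)²/4 + C² + D²), and this supremum is attained for some θ, φ ∈ ℝ. -/

import Mathlib

open Real

lemma exists_angle (x y : ℝ) (h : x ^ 2 + y ^ 2 = 1) :
    ∃ t : ℝ, Real.cos t = x ∧ Real.sin t = y := by
  have hx1 : -1 ≤ x := by nlinarith [sq_nonneg y]
  have hx2 : x ≤ 1 := by nlinarith [sq_nonneg y]
  rcases le_or_gt 0 y with hy | hy
  · refine ⟨Real.arccos x, Real.cos_arccos hx1 hx2, ?_⟩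
    rw [Real.sin_arccos]
    have hxy : 1 - x ^ 2 = y ^ 2 := by linarith
    rw [hxy, Real.sqrt_sq hy]
  · refine ⟨-Real.arccos x, by rw [Real.cos_neg]; exact Real.cos_arccos hx1 hx2, ?_⟩
    rw [Real.sin_neg, Real.sin_arccos]
    have hxy : 1 - x ^ 2 = y ^ 2 := by linarith
    rw [hxy, Real.sqrt_sq_eq_abs, abs_of_neg hy]; ring

lemma lincos_le (a b c s : ℝ) (h : c ^ 2 + s ^ 2 = 1) :
    a * c + b * s ≤ Real.sqrt (a ^ 2 + b ^ 2) := by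
  have h1 : (a * c + b * s) ^ 2 ≤ a ^ 2 + b ^ 2 := by
    nlinarith [sq_nonneg (a * s - b * c)]
  calc a * c + b * s ≤ |a * c + b * s| := le_abs_self _
    _ = Real.sqrt ((a * c + b * s) ^ 2) := (Real.sqrt_sq_eq_abs _).symm
    _ ≤ Real.sqrt (a ^ 2 + b ^ 2) := Real.sqrt_le_sqrt h1

/-- The maximum over the coherent-noise parameters θ, φ of the fidelity expression
`cos²θ·A + sin²θ·B + sin(2θ)(cos φ·C + sin φ·D)` equals
`(A+B)/2 + √((A−B)²/4 + C² + D²)`, and it is attained. -/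
theorem fidelity_optimization (A B C D : ℝ) :
    IsGreatest
      {x : ℝ | ∃ θ φ : ℝ,
        x = Real.cos θ ^ 2 * A + Real.sin θ ^ 2 * B
              + Real.sin (2 * θ) * (Real.cos φ * C + Real.sin φ * D)}
      ((A + B) / 2 + Real.sqrt ((A - B) ^ 2 / 4 + C ^ 2 + D ^ 2)) := by
  set r := Real.sqrt (C ^ 2 + D ^ 2) with hrdef
  set R := Real.sqrt ((A - B) ^ 2 / 4 + C ^ 2 + D ^ 2) with hRdef
  have hrnn : 0 ≤ r := Real.sqrt_nonneg _
  have hRnn : 0 ≤ R := Real.sqrt_nonneg _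
  have hr2 : r ^ 2 = C ^ 2 + D ^ 2 := Real.sq_sqrt (by positivity)
  have hR2 : R ^ 2 = (A - B) ^ 2 / 4 + C ^ 2 + D ^ 2 := Real.sq_sqrt (by positivity)
  clear_value r R
  constructor
  · -- membership: attained
    obtain ⟨φ, hφ⟩ : ∃ φ : ℝ, Real.cos φ * C + Real.sin φ * D = r := by
      rcases eq_or_lt_of_le hrnn with hr0 | hr0
      · have hC : C = 0 := by nlinarith [sq_nonneg D]
        have hD : D = 0 := by nlinarith [sq_nonneg C]
        exact ⟨0, by simp [hC, hD, ← hr0]⟩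
      · obtain ⟨t, hc, hs⟩ := exists_angle (C / r) (D / r)
          (by field_simp; linarith [hr2])
        refine ⟨t, ?_⟩
        rw [hc, hs]
        field_simp
        linarith [hr2]
    rcases eq_or_lt_of_le hRnn with hR0 | hR0
    · -- degenerate case: R = 0, so A = B and C = D = 0
      have hAB : A = B := by nlinarith [sq_nonneg C, sq_nonneg D]
      refine ⟨0, 0, ?_⟩
      have hC : C = 0 := by nlinarith [sq_nonneg D, sq_nonneg (A - B)]
      simp [← hR0, hAB]
    · have hRne : R ≠ 0 := ne_of_gt hR0
      have h1 : ((A - B) / 2) ^ 2 + r ^ 2 = R ^ 2 := by linear_combination hr2 - hR2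
      obtain ⟨t, hc, hs⟩ := exists_angle (((A - B) / 2) / R) (r / R)
        (by field_simp; linear_combination 4 * h1)
      refine ⟨t / 2, φ, ?_⟩
      have h2 : 2 * (t / 2) = t := by ring
      rw [h2, hφ]
      have hcs : Real.cos (t / 2) ^ 2 = 1 / 2 + Real.cos t / 2 := by
        rw [Real.cos_sq]; ring_nf
      have hss : Real.sin (t / 2) ^ 2 = 1 / 2 - Real.cos t / 2 := by
        have := Real.sin_sq_add_cos_sq (t / 2)
        linarith [hcs]
      rw [hcs, hss, hc, hs]
      field_simp
      linear_combination (-4) * h1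
  · -- upper bound
    rintro x ⟨θ, φ, rfl⟩
    have hS : Real.cos φ * C + Real.sin φ * D ≤ r := by
      have := lincos_le C D (Real.cos φ) (Real.sin φ)
        (by rw [← Real.sin_sq_add_cos_sq φ]; ring)
      linarith [this]
    have hS2 : (Real.cos φ * C + Real.sin φ * D) ^ 2 ≤ C ^ 2 + D ^ 2 := by
      nlinarith [sq_nonneg (Real.cos φ * D - Real.sin φ * C),
        Real.sin_sq_add_cos_sq φ]
    set S := Real.cos φ * C + Real.sin φ * D with hSdef
    have key : Real.cos (2 * θ) * ((A - B) / 2) + Real.sin (2 * θ) * S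
        ≤ Real.sqrt (((A - B) / 2) ^ 2 + S ^ 2) := by
      have := lincos_le ((A - B) / 2) S (Real.cos (2 * θ)) (Real.sin (2 * θ))
        (by rw [← Real.sin_sq_add_cos_sq (2 * θ)]; ring)
      linarith [this]
    have key2 : Real.sqrt (((A - B) / 2) ^ 2 + S ^ 2) ≤ R := by
      rw [hRdef]
      apply Real.sqrt_le_sqrt
      nlinarith [hS2]
    have hcs : Real.cos θ ^ 2 = 1 / 2 + Real.cos (2 * θ) / 2 := Real.cos_sq θ
    have hss : Real.sin θ ^ 2 = 1 / 2 - Real.cos (2 * θ) / 2 := by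
      have := Real.sin_sq_add_cos_sq θ
      linarith [hcs]
    rw [hcs, hss]
    linarith [key, key2]
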